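/- For k ≥ 1 and sorted triple (m,a,b) with multiplicities μ₁,…,μ_l, the number of nilpotent endomorphisms θ of the parabolic bundle O(m;a,b) over F_q vanishing at k fixed points s₁,…,s_k ∈ P¹(F_q)∖{0,∞} equals q^{Σ_{i<j} max(1−k+m_i−m_j−δ(a_j<a_i)−δ(b_j<b_i), 0)}. -/
import Mathlib


namespace Stmt18

/-- The space `Hom(O(m_j;a_j,b_j), O(m_i;a_i,b_i))` of homomorphisms of parabolic line
bundles on `ℙ¹` with marked points `0, ∞`, realized concretely: polynomials `p` with
`deg p ≤ m_i - m_j - δ(b_j<b_i)` and `p(0) = 0` whenever `a_j < a_i`. -/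
def HomCond {F : Type*} [Field F] {n : ℕ} (m a b : Fin n → ℕ) (i j : Fin n)
    (p : Polynomial F) : Prop :=
  p = 0 ∨ ((a j < a i → p.coeff 0 = 0) ∧
    (p.natDegree : ℤ) ≤ (m i : ℤ) - (m j : ℤ) - (if b j < b i then 1 else 0))

/-- An endomorphism of the parabolic bundle `O(m;a,b) = ⊕ᵢ O(mᵢ;aᵢ,bᵢ)`. -/
def IsEnd {F : Type*} [Field F] {n : ℕ} (m a b : Fin n → ℕ)
    (f : Matrix (Fin n) (Fin n) (Polynomial F)) : Prop :=
  ∀ i j, HomCond m a b i j (f i j)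

open Polynomial

lemma strict_pow_eq_zero {R : Type*} [CommRing R] {n : ℕ}
    (θ : Matrix (Fin n) (Fin n) R) (h : ∀ i j : Fin n, ¬ i < j → θ i j = 0) :
    θ ^ n = 0 := by
  have key : ∀ t : ℕ, ∀ i j : Fin n, (j : ℕ) < (i : ℕ) + t → (θ ^ t) i j = 0 := by
    intro t
    induction t with
    | zero =>
      intro i j hij
      rw [pow_zero]
      exact Matrix.one_apply_ne (by rintro rfl; omega)
    | succ t ih =>
      intro i j hij
      rw [pow_succ', Matrix.mul_apply]
      apply Finset.sum_eq_zero
      intro c _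
      by_cases hic : i < c
      · rw [ih c j (by have : (i:ℕ) < (c:ℕ) := hic; omega), mul_zero]
      · rw [h i c hic, zero_mul]
  ext i j
  rw [Matrix.zero_apply]
  exact key n i j (lt_of_lt_of_le j.isLt (Nat.le_add_left n i))

lemma count_multiples (F : Type*) [Field F] [Fintype F] (M : Polynomial F) (hM : M ≠ 0) (N : ℕ) :
    Nat.card {p : Polynomial F // ∃ g, p = M * g ∧ g ∈ degreeLT F N} = Fintype.card F ^ N := by
  classical
  have hbij : Function.Bijective (fun g : degreeLT F N =>
      (⟨M * g.1, g.1, rfl, g.2⟩ : {p : Polynomial F // ∃ g, p = M * g ∧ g ∈ degreeLT F N})) := by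
    constructor
    · intro g₁ g₂ hg
      have := congrArg Subtype.val hg
      exact Subtype.ext (mul_left_cancel₀ hM this)
    · rintro ⟨p, g, rfl, hg⟩
      exact ⟨⟨g, hg⟩, rfl⟩
  rw [← Nat.card_congr (Equiv.ofBijective _ hbij),
    Nat.card_congr (degreeLTEquiv F N).toEquiv, Nat.card_eq_fintype_card]
  simp
open Polynomial

lemma fiber_card (F : Type*) [Field F] [Fintype F] {k : ℕ} (s : Fin k → F)
    (hs : Function.Injective s) (hs0 : ∀ l, s l ≠ 0) (D : ℤ) (c : Prop) [Decidable c] :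
    Nat.card {p : Polynomial F // (p = 0 ∨ ((c → p.coeff 0 = 0) ∧ (p.natDegree : ℤ) ≤ D)) ∧
      ∀ l, Polynomial.eval (s l) p = 0} =
    Fintype.card F ^ (D + 1 - (k : ℤ) - (if c then 1 else 0)).toNat := by
  classical
  set E : ℕ := if c then 1 else 0 with hE
  have hEZ : ((E : ℤ)) = if c then 1 else 0 := by rw [hE]; split_ifs <;> simp
  set Q : Polynomial F := ∏ l : Fin k, (X - C (s l)) with hQ
  set M : Polynomial F := (if c then X else 1) * Q with hM
  have hQmonic : Q.Monic := monic_prod_of_monic _ _ fun l _ => monic_X_sub_C _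
  have hQdeg : Q.natDegree = k := by
    rw [hQ, natDegree_prod _ _ fun l _ => X_sub_C_ne_zero (s l)]
    simp
  have hMdegN : M.natDegree = E + k := by
    by_cases hc : c
    · rw [hM, if_pos hc, natDegree_mul X_ne_zero hQmonic.ne_zero, natDegree_X, hQdeg,
        hE, if_pos hc]
    · rw [hM, if_neg hc, one_mul, hQdeg, hE, if_neg hc, zero_add]
  have hM0 : M ≠ 0 := by
    by_cases hc : c
    · rw [hM, if_pos hc]; exact mul_ne_zero X_ne_zero hQmonic.ne_zero
    · rw [hM, if_neg hc, one_mul]; exact hQmonic.ne_zero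
  have hMeval : ∀ l, Polynomial.eval (s l) M = 0 := fun l => by
    rw [hM, eval_mul, hQ, eval_prod, Finset.prod_eq_zero (Finset.mem_univ l) (by simp),
      mul_zero]
  have hMc : c → M.coeff 0 = 0 := fun hc => by
    rw [hM, if_pos hc, mul_coeff_zero, coeff_X_zero, zero_mul]
  set N := (D + 1 - (k : ℤ) - (if c then 1 else 0)).toNat with hN
  have hE01 : E = 0 ∨ E = 1 := by rw [hE]; split_ifs <;> simp
  have hNiff : ∀ g : Polynomial F, g ≠ 0 →
      (g ∈ degreeLT F N ↔ (g.natDegree : ℤ) + E + k ≤ D) := by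
    intro g hg
    rw [mem_degreeLT, ← natDegree_lt_iff_degree_lt hg, hN, ← hEZ, Int.lt_toNat]
    omega
  have hiff : ∀ p : Polynomial F,
      ((p = 0 ∨ ((c → p.coeff 0 = 0) ∧ (p.natDegree : ℤ) ≤ D)) ∧
        ∀ l, Polynomial.eval (s l) p = 0) ↔ ∃ g, p = M * g ∧ g ∈ degreeLT F N := by
    intro p
    constructor
    · rintro ⟨h1, hev⟩
      rcases h1 with rfl | ⟨hc0, hdeg⟩
      · refine ⟨0, (mul_zero M).symm, ?_⟩
        rw [mem_degreeLT, degree_zero]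
        exact WithBot.bot_lt_coe N
      · have hdvdQ : Q ∣ p := Finset.prod_dvd_of_coprime
          ((pairwise_coprime_X_sub_C hs).set_pairwise _)
          (fun l _ => dvd_iff_isRoot.mpr (hev l))
        have hdvdM : M ∣ p := by
          by_cases hc : c
          · rw [hM, if_pos hc]
            have hcop : IsCoprime (X : Polynomial F) Q :=
              IsCoprime.prod_right fun l _ => by
                have h1 : IsCoprime (X - C (0:F)) (X - C (s l)) :=
                  isCoprime_X_sub_C_of_isUnit_sub
                    (by simpa using Ne.isUnit (neg_ne_zero.mpr (hs0 l)))
                simpa using h1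
            exact hcop.mul_dvd (X_dvd_iff.mpr (hc0 hc)) hdvdQ
          · rw [hM, if_neg hc, one_mul]; exact hdvdQ
        obtain ⟨g, rfl⟩ := hdvdM
        refine ⟨g, rfl, ?_⟩
        rcases eq_or_ne g 0 with rfl | hgne
        · rw [mem_degreeLT, degree_zero]; exact WithBot.bot_lt_coe N
        · rw [hNiff g hgne]
          rw [natDegree_mul hM0 hgne, hMdegN] at hdeg
          push_cast at hdeg
          omega
    · rintro ⟨g, rfl, hg⟩
      refine ⟨?_, fun l => by rw [eval_mul, hMeval l, zero_mul]⟩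
      rcases eq_or_ne g 0 with rfl | hgne
      · exact Or.inl (mul_zero M)
      · refine Or.inr ⟨fun hc => by rw [mul_coeff_zero, hMc hc, zero_mul], ?_⟩
        have h1 := (hNiff g hgne).mp hg
        rw [natDegree_mul hM0 hgne, hMdegN]
        push_cast
        omega
  rw [Nat.card_congr (Equiv.subtypeEquivRight hiff)]
  exact count_multiples F M hM0 N

set_option maxHeartbeats 1000000 in
/-- For `k ≥ 1`, a sorted triple `(m,a,b)` and `k` distinct points `s₁,…,s_k` of
`ℙ¹(F_q) ∖ {0,∞}`, the number of nilpotent endomorphisms of the parabolic bundle `O(m;a,b)`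
vanishing at every `s_l` equals
`q^{Σ_{i<j} max(1-k+m_i-m_j-δ(a_j<a_i)-δ(b_j<b_i), 0)}`. -/
theorem stmt_18 (F : Type*) [Field F] [Fintype F] (q : ℕ) (hq : Fintype.card F = q)
    (k : ℕ) (hk : 1 ≤ k) (s : Fin k → F) (hs : Function.Injective s) (hs0 : ∀ l, s l ≠ 0)
    (n : ℕ) (m a b : Fin n → ℕ) (ha : ∀ i, 1 ≤ a i) (hb : ∀ i, 1 ≤ b i)
    (hsort : ∀ i j : Fin n, i < j →
      m j ≤ m i ∧ (m i = m j → a i ≤ a j) ∧ (m i = m j → a i = a j → b i ≤ b j)) :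
    Nat.card {θ : Matrix (Fin n) (Fin n) (Polynomial F) //
        IsEnd m a b θ ∧ IsNilpotent θ ∧ ∀ l, θ.map (Polynomial.eval (s l)) = 0} =
      q ^ (∑ p ∈ Finset.univ.filter (fun p : Fin n × Fin n => p.1 < p.2),
        (max (1 - (k : ℤ) + (m p.1 : ℤ) - (m p.2 : ℤ) - (if a p.2 < a p.1 then 1 else 0)
          - (if b p.2 < b p.1 then 1 else 0)) 0).toNat) := by

  classical
  -- lower entries vanish
  have hlow : ∀ θ : Matrix (Fin n) (Fin n) (Polynomial F),
      IsEnd m a b θ → (∀ l, θ.map (Polynomial.eval (s l)) = 0) →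
      ∀ i j : Fin n, ¬ i < j → θ i j = 0 := by
    intro θ hEnd hev i j hij
    have hev1 : Polynomial.eval (s ⟨0, hk⟩) (θ i j) = 0 := by
      have h := hev ⟨0, hk⟩
      have h2 : (θ.map (Polynomial.eval (s ⟨0, hk⟩))) i j = 0 := by rw [h]; rfl
      simpa [Matrix.map_apply] using h2
    rcases hEnd i j with h0 | ⟨hc, hdeg⟩
    · exact h0
    · have hmle : m i ≤ m j := by
        rcases lt_or_eq_of_le (not_lt.mp hij) with h' | h'
        · exact (hsort j i h').1
        · rw [h']
      have hd0 : (θ i j).natDegree = 0 := by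
        split_ifs at hdeg <;> omega
      have hC := Polynomial.eq_C_of_natDegree_eq_zero hd0
      rw [hC] at hev1 ⊢
      rw [eval_C] at hev1
      rw [hev1, map_zero]
  -- fibers
  set T : {p : Fin n × Fin n // p.1 < p.2} → Type _ := fun p =>
    {g : Polynomial F // HomCond m a b p.1.1 p.1.2 g ∧ ∀ l, Polynomial.eval (s l) g = 0}
      with hT
  have e1 : {θ : Matrix (Fin n) (Fin n) (Polynomial F) //
      IsEnd m a b θ ∧ IsNilpotent θ ∧ ∀ l, θ.map (Polynomial.eval (s l)) = 0} ≃
      ∀ p : {p : Fin n × Fin n // p.1 < p.2}, T p := by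
    refine
      { toFun := fun θ p => ⟨θ.1 p.1.1 p.1.2, θ.2.1 _ _, fun l => ?_⟩
        invFun := fun g => ⟨Matrix.of fun i j =>
          if h : i < j then (g ⟨(i, j), h⟩).1 else 0, ?_, ?_, ?_⟩
        left_inv := ?_
        right_inv := ?_ }
    · have h2 : (θ.1.map (Polynomial.eval (s l))) p.1.1 p.1.2 = 0 := by
        rw [θ.2.2.2 l]; rfl
      simpa [Matrix.map_apply] using h2
    · intro i j
      simp only [Matrix.of_apply]
      split_ifs with h
      · exact (g ⟨(i, j), h⟩).2.1
      · exact Or.inl rfl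
    · refine ⟨n, strict_pow_eq_zero _ fun i j hij => ?_⟩
      simp only [Matrix.of_apply]
      rw [dif_neg hij]
    · intro l
      refine Matrix.ext fun i j => ?_
      simp only [Matrix.map_apply, Matrix.of_apply, Matrix.zero_apply]
      split_ifs with h
      · exact (g ⟨(i, j), h⟩).2.2 l
      · simp
    · intro θ
      apply Subtype.ext
      refine Matrix.ext fun i j => ?_
      simp only [Matrix.of_apply]
      split_ifs with h
      · rfl
      · exact (hlow θ.1 θ.2.1 θ.2.2.2 i j h).symm
    · intro g
      funext p
      apply Subtype.ext
      obtain ⟨⟨i, j⟩, hij⟩ := p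
      simp only [Matrix.of_apply]
      rw [dif_pos hij]
  rw [Nat.card_congr e1, Nat.card_pi]
  have hfib : ∀ p : {p : Fin n × Fin n // p.1 < p.2}, Nat.card (T p) =
      q ^ (max (1 - (k : ℤ) + (m p.1.1 : ℤ) - (m p.1.2 : ℤ)
        - (if a p.1.2 < a p.1.1 then 1 else 0)
        - (if b p.1.2 < b p.1.1 then 1 else 0)) 0).toNat := by
    intro p
    have h1 : Nat.card (T p) = Fintype.card F ^
        (((m p.1.1 : ℤ) - (m p.1.2 : ℤ) - (if b p.1.2 < b p.1.1 then 1 else 0)) + 1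
          - (k : ℤ) - (if a p.1.2 < a p.1.1 then 1 else 0)).toNat :=
      fiber_card F s hs hs0 _ _
    rw [h1, hq]
    congr 1
    split_ifs <;> omega
  calc (∏ p : {p : Fin n × Fin n // p.1 < p.2}, Nat.card (T p))
      = ∏ p : {p : Fin n × Fin n // p.1 < p.2},
          q ^ (max (1 - (k : ℤ) + (m p.1.1 : ℤ) - (m p.1.2 : ℤ)
            - (if a p.1.2 < a p.1.1 then 1 else 0)
            - (if b p.1.2 < b p.1.1 then 1 else 0)) 0).toNat :=
        Finset.prod_congr rfl fun p _ => hfib p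
    _ = ∏ p ∈ Finset.univ.filter (fun p : Fin n × Fin n => p.1 < p.2),
          q ^ (max (1 - (k : ℤ) + (m p.1 : ℤ) - (m p.2 : ℤ)
            - (if a p.2 < a p.1 then 1 else 0)
            - (if b p.2 < b p.1 then 1 else 0)) 0).toNat :=
        (Finset.prod_subtype (Finset.univ.filter fun p : Fin n × Fin n => p.1 < p.2)
          (fun x => by simp)
          (fun p : Fin n × Fin n => q ^ (max (1 - (k : ℤ) + (m p.1 : ℤ) - (m p.2 : ℤ)
            - (if a p.2 < a p.1 then 1 else 0)
            - (if b p.2 < b p.1 then 1 else 0)) 0).toNat)).symm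
    _ = _ := by rw [Finset.prod_pow_eq_pow_sum]

end Stmt18
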